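/- arXiv:2308.10439 — 3 statements merged into one kernel-verified Lean document; each statement's English description precedes it below -/
import Mathlib

section
/- Let A ∈ ℝ^{m×n} with m ≥ n, let x ∈ ℝⁿ satisfy Ax = b, and let ε > 0. Let E ∈ ℝ^{m×n} with ‖E‖₂ < ε/2 and e ∈ ℝ^m. Let σ̂_k ≥ ε ≥ σ̂_{k+1}, where σ̂_j are the singular values of A+E in descending order, and let x̂_k = (A+E)_k^† (b+e), where (A+E)_k^† is the pseudo-inverse of the k-truncated SVD of A+E. Then ‖x̂_k‖₂ ≤ (1/σ̂_k)(2ε‖x‖₂ + ‖e‖₂) + ‖x‖₂. -/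
open MeasureTheory Finset
open scoped RealInnerProductSpace

lemma norm_sq_sum_smul_orthonormal {n : ℕ} {v : Fin n → EuclideanSpace ℝ (Fin n)}
    (hv : Orthonormal ℝ v) (c : Fin n → ℝ) :
    ‖∑ i : Fin n, c i • v i‖ ^ 2 = ∑ i : Fin n, (c i) ^ 2 := by
  rw [← real_inner_self_eq_norm_sq, sum_inner]
  simp_rw [real_inner_smul_left, hv.inner_right_fintype c, sq]

/-- bound on the norm of the solution obtained from the truncated SVD of
a perturbed linear system.  The SVD of `A + E` is given by orthonormal families `u`, `v`
and singular values `s` in descending order; the pseudo-inverse of the `k`-truncated SVD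
keeps only the `k` largest singular values. -/
theorem tsvd_solution_norm_bound
    (m n k : ℕ) (hmn : n ≤ m) (hk1 : 1 ≤ k) (hkn : k ≤ n) (ε : ℝ) (hε : 0 < ε)
    (A E : EuclideanSpace ℝ (Fin n) →L[ℝ] EuclideanSpace ℝ (Fin m))
    (u : Fin n → EuclideanSpace ℝ (Fin m)) (v : Fin n → EuclideanSpace ℝ (Fin n))
    (hu : Orthonormal ℝ u) (hv : Orthonormal ℝ v)
    (s : Fin n → ℝ) (hs : Antitone s) (hs0 : ∀ i, 0 ≤ s i)
    (hsvd : ∀ y, (A + E) y = ∑ i : Fin n, (s i * ⟪v i, y⟫) • u i)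
    (hE : ‖E‖ < ε / 2)
    (hε1 : ∀ i : Fin n, (i : ℕ) < k → ε ≤ s i)
    (hε2 : ∀ i : Fin n, k ≤ (i : ℕ) → s i ≤ ε)
    (x : EuclideanSpace ℝ (Fin n)) (b e : EuclideanSpace ℝ (Fin m))
    (hAx : A x = b)
    (pinv : EuclideanSpace ℝ (Fin m) →L[ℝ] EuclideanSpace ℝ (Fin n))
    (hpinv : ∀ z, pinv z =
      ∑ i : Fin n, (if (i : ℕ) < k then (s i)⁻¹ * ⟪u i, z⟫ else 0) • v i)
    (xhat : EuclideanSpace ℝ (Fin n)) (hxhat : xhat = pinv (b + e)) :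
    ‖xhat‖ ≤ (1 / s ⟨k - 1, by omega⟩) * (2 * ε * ‖x‖ + ‖e‖) + ‖x‖ := by
  set σ : ℝ := s ⟨k - 1, by omega⟩ with hσdef
  have hσε : ε ≤ σ := hε1 _ (by simp; omega)
  have hσ0 : 0 < σ := lt_of_lt_of_le hε hσε
  -- each s i for i < k is ≥ σ
  have hsi : ∀ i : Fin n, (i : ℕ) < k → σ ≤ s i := by
    intro i hi
    exact hs (by simp [Fin.le_def]; omega)
  -- pinv ((A+E) x) = truncated projection of x
  have key1 : pinv ((A + E) x) = ∑ i : Fin n, (if (i : ℕ) < k then ⟪v i, x⟫ else 0) • v i := by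
    rw [hpinv]
    refine Finset.sum_congr rfl (fun i _ => ?_)
    congr 1
    split_ifs with hi
    · rw [hsvd]
      rw [hu.inner_right_fintype (fun j => s j * ⟪v j, x⟫) i]
      rw [← mul_assoc, inv_mul_cancel₀ (ne_of_gt (lt_of_lt_of_le hε (hε1 i hi))), one_mul]
    · rfl
  have bd1 : ‖pinv ((A + E) x)‖ ≤ ‖x‖ := by
    rw [key1]
    have h1 : ‖∑ i : Fin n, (if (i : ℕ) < k then ⟪v i, x⟫ else 0) • v i‖ ^ 2 ≤ ‖x‖ ^ 2 := by
      rw [norm_sq_sum_smul_orthonormal hv]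
      calc ∑ i : Fin n, (if (i : ℕ) < k then ⟪v i, x⟫ else 0) ^ 2
          ≤ ∑ i : Fin n, ‖⟪v i, x⟫‖ ^ 2 := by
            apply Finset.sum_le_sum
            intro i _
            split_ifs
            · rw [Real.norm_eq_abs, sq_abs]
            · simp only [ne_eq, zero_pow, OfNat.ofNat_ne_zero, not_false_eq_true]
              positivity
        _ ≤ ‖x‖ ^ 2 := hv.sum_inner_products_le x
    calc ‖∑ i : Fin n, (if (i : ℕ) < k then ⟪v i, x⟫ else 0) • v i‖
        = Real.sqrt (‖∑ i : Fin n, (if (i : ℕ) < k then ⟪v i, x⟫ else 0) • v i‖ ^ 2) :=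
          (Real.sqrt_sq (norm_nonneg _)).symm
      _ ≤ Real.sqrt (‖x‖ ^ 2) := Real.sqrt_le_sqrt h1
      _ = ‖x‖ := Real.sqrt_sq (norm_nonneg _)
  -- operator bound for pinv
  have bd2 : ∀ z, ‖pinv z‖ ≤ σ⁻¹ * ‖z‖ := by
    intro z
    have h1 : ‖pinv z‖ ^ 2 ≤ (σ⁻¹ * ‖z‖) ^ 2 := by
      rw [hpinv, norm_sq_sum_smul_orthonormal hv]
      calc ∑ i : Fin n, (if (i : ℕ) < k then (s i)⁻¹ * ⟪u i, z⟫ else 0) ^ 2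
          ≤ ∑ i : Fin n, σ⁻¹ ^ 2 * ‖⟪u i, z⟫‖ ^ 2 := by
            apply Finset.sum_le_sum
            intro i _
            split_ifs with hi
            · have hsiσ := hsi i hi
              have hsip : 0 < s i := lt_of_lt_of_le hσ0 hsiσ
              have hinv : (s i)⁻¹ ≤ σ⁻¹ := inv_anti₀ hσ0 hsiσ
              have h2 : (s i)⁻¹ ^ 2 ≤ σ⁻¹ ^ 2 := pow_le_pow_left₀ (by positivity) hinv 2
              rw [mul_pow, Real.norm_eq_abs, sq_abs]
              exact mul_le_mul_of_nonneg_right h2 (sq_nonneg _)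
            · simp
              positivity
        _ = σ⁻¹ ^ 2 * ∑ i : Fin n, ‖⟪u i, z⟫‖ ^ 2 := by rw [Finset.mul_sum]
        _ ≤ σ⁻¹ ^ 2 * ‖z‖ ^ 2 := by
            apply mul_le_mul_of_nonneg_left (hu.sum_inner_products_le z) (by positivity)
        _ = (σ⁻¹ * ‖z‖) ^ 2 := by ring
    calc ‖pinv z‖ = Real.sqrt (‖pinv z‖ ^ 2) := (Real.sqrt_sq (norm_nonneg _)).symm
      _ ≤ Real.sqrt ((σ⁻¹ * ‖z‖) ^ 2) := Real.sqrt_le_sqrt h1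
      _ = σ⁻¹ * ‖z‖ := Real.sqrt_sq (by positivity)
  -- decomposition
  have hdecomp : b + e = (A + E) x + (e - E x) := by
    rw [← hAx]; simp [ContinuousLinearMap.add_apply]
  have hEx : ‖e - E x‖ ≤ 2 * ε * ‖x‖ + ‖e‖ := by
    calc ‖e - E x‖ ≤ ‖e‖ + ‖E x‖ := norm_sub_le _ _
      _ ≤ ‖e‖ + ‖E‖ * ‖x‖ := by linarith [E.le_opNorm x]
      _ ≤ ‖e‖ + (ε / 2) * ‖x‖ := by nlinarith [norm_nonneg x]
      _ ≤ 2 * ε * ‖x‖ + ‖e‖ := by nlinarith [norm_nonneg x]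
  calc ‖xhat‖ = ‖pinv ((A + E) x) + pinv (e - E x)‖ := by
        rw [hxhat, hdecomp, map_add]
    _ ≤ ‖pinv ((A + E) x)‖ + ‖pinv (e - E x)‖ := norm_add_le _ _
    _ ≤ ‖x‖ + σ⁻¹ * ‖e - E x‖ := by linarith [bd2 (e - E x)]
    _ ≤ ‖x‖ + σ⁻¹ * (2 * ε * ‖x‖ + ‖e‖) := by
        apply add_le_add le_rfl
        apply mul_le_mul_of_nonneg_left hEx (by positivity)
    _ = (1 / σ) * (2 * ε * ‖x‖ + ‖e‖) + ‖x‖ := by rw [one_div]; ring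
end

section
/- Let A ∈ ℝ^{m×n} with m ≥ n, let x ∈ ℝⁿ satisfy Ax = b, and let ε > 0. Let E ∈ ℝ^{m×n} with ‖E‖₂ < ε/2 and e ∈ ℝ^m. Let σ̂_k ≥ ε ≥ σ̂_{k+1}, where σ̂_j are the singular values of A+E in descending order, and let x̂_k = (A+E)_k^† (b+e). Then the residual satisfies ‖A x̂_k − b‖₂ ≤ 5ε‖x‖₂ + (3/2)‖e‖₂. -/
open MeasureTheory Finset
open scoped RealInnerProductSpace

lemma onorm_sq {N : ℕ} {H : Type*} [NormedAddCommGroup H] [InnerProductSpace ℝ H]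
    {w : Fin N → H} (hw : Orthonormal ℝ w) (c : Fin N → ℝ) :
    ‖∑ i : Fin N, c i • w i‖ ^ 2 = ∑ i : Fin N, (c i) ^ 2 := by
  rw [← real_inner_self_eq_norm_sq, sum_inner]
  simp only [real_inner_smul_left, hw.inner_right_fintype, sq]

lemma bessel_real {N : ℕ} {H : Type*} [NormedAddCommGroup H] [InnerProductSpace ℝ H]
    {w : Fin N → H} (hw : Orthonormal ℝ w) (y : H) :
    ∑ i : Fin N, ⟪w i, y⟫ ^ 2 ≤ ‖y‖ ^ 2 := by
  have := hw.sum_inner_products_le (s := Finset.univ) y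
  simpa [Real.norm_eq_abs, sq_abs] using this

lemma sum_sq_le {b c : ℝ} (hb : 0 ≤ b) (hc : 0 ≤ c) : b ^ 2 + c ^ 2 ≤ (b + c) ^ 2 := by
  nlinarith

lemma norm_le_of_sq_le {H : Type*} [NormedAddCommGroup H] {y : H} {t : ℝ}
    (ht : 0 ≤ t) (h : ‖y‖ ^ 2 ≤ t ^ 2) : ‖y‖ ≤ t := by
  nlinarith [norm_nonneg y]

/-- bound on the residual of the solution obtained from the truncated SVD of
a perturbed linear system.  The SVD of `A + E` is given by orthonormal families `u`, `v`
and singular values `s` in descending order; the pseudo-inverse of the `k`-truncated SVD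
keeps only the `k` largest singular values. -/
theorem tsvd_residual_bound
    (m n k : ℕ) (hmn : n ≤ m) (hk1 : 1 ≤ k) (hkn : k ≤ n) (ε : ℝ) (hε : 0 < ε)
    (A E : EuclideanSpace ℝ (Fin n) →L[ℝ] EuclideanSpace ℝ (Fin m))
    (u : Fin n → EuclideanSpace ℝ (Fin m)) (v : Fin n → EuclideanSpace ℝ (Fin n))
    (hu : Orthonormal ℝ u) (hv : Orthonormal ℝ v)
    (s : Fin n → ℝ) (hs : Antitone s) (hs0 : ∀ i, 0 ≤ s i)
    (hsvd : ∀ y, (A + E) y = ∑ i : Fin n, (s i * ⟪v i, y⟫) • u i)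
    (hE : ‖E‖ < ε / 2)
    (hε1 : ∀ i : Fin n, (i : ℕ) < k → ε ≤ s i)
    (hε2 : ∀ i : Fin n, k ≤ (i : ℕ) → s i ≤ ε)
    (x : EuclideanSpace ℝ (Fin n)) (b e : EuclideanSpace ℝ (Fin m))
    (hAx : A x = b)
    (pinv : EuclideanSpace ℝ (Fin m) →L[ℝ] EuclideanSpace ℝ (Fin n))
    (hpinv : ∀ z, pinv z =
      ∑ i : Fin n, (if (i : ℕ) < k then (s i)⁻¹ * ⟪u i, z⟫ else 0) • v i)
    (xhat : EuclideanSpace ℝ (Fin n)) (hxhat : xhat = pinv (b + e)) :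
    ‖A xhat - b‖ ≤ 5 * ε * ‖x‖ + 3 / 2 * ‖e‖ := by
  set wv : EuclideanSpace ℝ (Fin m) := e - E x with hwv
  have hsne : ∀ i : Fin n, (i : ℕ) < k → s i ≠ 0 := fun i hi =>
    ne_of_gt (lt_of_lt_of_le hε (hε1 i hi))
  have hbw : b + e = (A + E) x + wv := by
    rw [hwv, ContinuousLinearMap.add_apply, hAx]
    abel
  have hub : ∀ i : Fin n, ⟪u i, b + e⟫ = s i * ⟪v i, x⟫ + ⟪u i, wv⟫ := by
    intro i
    rw [hbw, inner_add_right, hsvd, hu.inner_right_fintype]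
  -- xhat as an explicit sum
  have hxs : xhat = ∑ i : Fin n,
      (if (i : ℕ) < k then ⟪v i, x⟫ + (s i)⁻¹ * ⟪u i, wv⟫ else 0) • v i := by
    rw [hxhat, hpinv]
    refine Finset.sum_congr rfl fun i _ => ?_
    by_cases hi : (i : ℕ) < k
    · simp only [hi, if_true, hub i]
      congr 1
      rw [mul_add, ← mul_assoc, inv_mul_cancel₀ (hsne i hi), one_mul]
    · simp [hi]
  -- residual identity
  set g : Fin n → ℝ := fun i =>
    if (i : ℕ) < k then ⟪u i, wv⟫ else -(s i * ⟪v i, x⟫) with hg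
  have key : A xhat - b = (∑ i : Fin n, g i • u i) + (E x - E xhat) := by
    have h1 : (A + E) xhat = ∑ i : Fin n,
        (s i * (if (i : ℕ) < k then ⟪v i, x⟫ + (s i)⁻¹ * ⟪u i, wv⟫ else 0)) • u i := by
      rw [hsvd]
      refine Finset.sum_congr rfl fun i _ => ?_
      congr 2
      rw [hxs, hv.inner_right_fintype]
    have h2 : (A + E) x = ∑ i : Fin n, (s i * ⟪v i, x⟫) • u i := hsvd x
    have hb : b = (A + E) x - E x := by
      rw [ContinuousLinearMap.add_apply, hAx]; abel
    have hA : A xhat = (A + E) xhat - E xhat := by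
      rw [ContinuousLinearMap.add_apply]; abel
    have hterm : ∀ i : Fin n,
        (s i * (if (i : ℕ) < k then ⟪v i, x⟫ + (s i)⁻¹ * ⟪u i, wv⟫ else 0)) • u i
          - (s i * ⟪v i, x⟫) • u i = g i • u i := by
      intro i
      rw [← sub_smul]
      congr 1
      by_cases hi : (i : ℕ) < k
      · simp only [hg, hi, if_true]
        rw [mul_add, ← mul_assoc, mul_inv_cancel₀ (hsne i hi), one_mul]
        ring
      · simp only [hg, hi, if_false]
        ring
    have hsum : (∑ i : Fin n,
          (s i * (if (i : ℕ) < k then ⟪v i, x⟫ + (s i)⁻¹ * ⟪u i, wv⟫ else 0)) • u i)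
        - ∑ i : Fin n, (s i * ⟪v i, x⟫) • u i = ∑ i : Fin n, g i • u i := by
      rw [← Finset.sum_sub_distrib]
      exact Finset.sum_congr rfl fun i _ => hterm i
    rw [hA, hb, h1, h2, ← hsum]
    abel
  -- norm bounds
  have hEx : ‖E x‖ ≤ ε / 2 * ‖x‖ :=
    (E.le_opNorm x).trans (mul_le_mul_of_nonneg_right hE.le (norm_nonneg x))
  have hExhat : ‖E xhat‖ ≤ ε / 2 * ‖xhat‖ :=
    (E.le_opNorm xhat).trans (mul_le_mul_of_nonneg_right hE.le (norm_nonneg xhat))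
  have hwvb : ‖wv‖ ≤ ‖e‖ + ε / 2 * ‖x‖ := by
    have h := norm_sub_le e (E x)
    rw [hwv]
    linarith only [h, hEx]
  -- bound on ∑ g i • u i
  have hgb : ‖∑ i : Fin n, g i • u i‖ ≤ ‖wv‖ + ε * ‖x‖ := by
    have hsq : ‖∑ i : Fin n, g i • u i‖ ^ 2 = ∑ i : Fin n, g i ^ 2 := onorm_sq hu g
    have hle : ∑ i : Fin n, g i ^ 2 ≤
        (∑ i : Fin n, ⟪u i, wv⟫ ^ 2) + ∑ i : Fin n, ε ^ 2 * ⟪v i, x⟫ ^ 2 := by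
      rw [← Finset.sum_add_distrib]
      refine Finset.sum_le_sum fun i _ => ?_
      by_cases hi : (i : ℕ) < k
      · simp only [hg, hi, if_true]
        exact le_add_of_nonneg_right (by positivity)
      · simp only [hg, hi, if_false]
        have h1 : s i ≤ ε := hε2 i (le_of_not_gt hi)
        have h2 : 0 ≤ s i := hs0 i
        calc (-(s i * ⟪v i, x⟫)) ^ 2 = s i ^ 2 * ⟪v i, x⟫ ^ 2 := by ring
          _ ≤ ε ^ 2 * ⟪v i, x⟫ ^ 2 :=
              mul_le_mul_of_nonneg_right (pow_le_pow_left₀ h2 h1 2) (sq_nonneg _)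
          _ ≤ ⟪u i, wv⟫ ^ 2 + ε ^ 2 * ⟪v i, x⟫ ^ 2 := le_add_of_nonneg_left (sq_nonneg _)
    have b1 : ∑ i : Fin n, ⟪u i, wv⟫ ^ 2 ≤ ‖wv‖ ^ 2 := bessel_real hu wv
    have b2 : ∑ i : Fin n, ε ^ 2 * ⟪v i, x⟫ ^ 2 ≤ ε ^ 2 * ‖x‖ ^ 2 := by
      rw [← Finset.mul_sum]
      exact mul_le_mul_of_nonneg_left (bessel_real hv x) (sq_nonneg ε)
    have h5 : ‖∑ i : Fin n, g i • u i‖ ^ 2 ≤ ‖wv‖ ^ 2 + ε ^ 2 * ‖x‖ ^ 2 := by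
      rw [hsq]; linarith only [hle, b1, b2]
    refine norm_le_of_sq_le (by positivity) ?_
    calc ‖∑ i : Fin n, g i • u i‖ ^ 2 ≤ ‖wv‖ ^ 2 + ε ^ 2 * ‖x‖ ^ 2 := h5
      _ = ‖wv‖ ^ 2 + (ε * ‖x‖) ^ 2 := by ring
      _ ≤ (‖wv‖ + ε * ‖x‖) ^ 2 :=
          sum_sq_le (norm_nonneg wv) (mul_nonneg hε.le (norm_nonneg x))
  -- bound on xhat
  have hxhb : ‖xhat‖ ≤ ‖x‖ + ε⁻¹ * ‖wv‖ := by
    have hsplit : xhat = (∑ i : Fin n, (if (i : ℕ) < k then ⟪v i, x⟫ else 0) • v i)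
        + ∑ i : Fin n, (if (i : ℕ) < k then (s i)⁻¹ * ⟪u i, wv⟫ else 0) • v i := by
      rw [hxs, ← Finset.sum_add_distrib]
      refine Finset.sum_congr rfl fun i _ => ?_
      by_cases hi : (i : ℕ) < k <;> simp [hi, add_smul]
    have n1 : ‖∑ i : Fin n, (if (i : ℕ) < k then ⟪v i, x⟫ else 0) • v i‖ ≤ ‖x‖ := by
      have hsq := onorm_sq hv (fun i => if (i : ℕ) < k then ⟪v i, x⟫ else 0)
      have hle : ∑ i : Fin n, (if (i : ℕ) < k then (⟪v i, x⟫ : ℝ) else 0) ^ 2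
          ≤ ∑ i : Fin n, ⟪v i, x⟫ ^ 2 := by
        refine Finset.sum_le_sum fun i _ => ?_
        by_cases hi : (i : ℕ) < k <;> simp [hi, sq_nonneg]
      have hbl := bessel_real hv x
      refine norm_le_of_sq_le (norm_nonneg x) ?_
      rw [hsq]; linarith only [hle, hbl]
    have n2 : ‖∑ i : Fin n, (if (i : ℕ) < k then (s i)⁻¹ * ⟪u i, wv⟫ else 0) • v i‖
        ≤ ε⁻¹ * ‖wv‖ := by
      have hsq := onorm_sq hv (fun i => if (i : ℕ) < k then (s i)⁻¹ * ⟪u i, wv⟫ else 0)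
      have hle : ∑ i : Fin n, (if (i : ℕ) < k then (s i)⁻¹ * (⟪u i, wv⟫ : ℝ) else 0) ^ 2
          ≤ ∑ i : Fin n, ε⁻¹ ^ 2 * ⟪u i, wv⟫ ^ 2 := by
        refine Finset.sum_le_sum fun i _ => ?_
        by_cases hi : (i : ℕ) < k
        · simp only [hi, if_true]
          have h1 : ε ≤ s i := hε1 i hi
          have h2 : (s i)⁻¹ ≤ ε⁻¹ := inv_anti₀ hε h1
          have h3 : 0 ≤ (s i)⁻¹ := inv_nonneg.2 (hs0 i)
          calc ((s i)⁻¹ * ⟪u i, wv⟫) ^ 2 = (s i)⁻¹ ^ 2 * ⟪u i, wv⟫ ^ 2 := by ring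
            _ ≤ ε⁻¹ ^ 2 * ⟪u i, wv⟫ ^ 2 :=
                mul_le_mul_of_nonneg_right (pow_le_pow_left₀ h3 h2 2) (sq_nonneg _)
        · simp only [hi, if_false]
          rw [(by norm_num : (0:ℝ) ^ 2 = 0)]
          positivity
      have hb1 : ∑ i : Fin n, ε⁻¹ ^ 2 * ⟪u i, wv⟫ ^ 2 ≤ ε⁻¹ ^ 2 * ‖wv‖ ^ 2 := by
        rw [← Finset.mul_sum]
        exact mul_le_mul_of_nonneg_left (bessel_real hu wv) (sq_nonneg _)
      have hεinv : 0 ≤ ε⁻¹ := inv_nonneg.2 hε.le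
      refine norm_le_of_sq_le (mul_nonneg hεinv (norm_nonneg wv)) ?_
      rw [hsq, mul_pow]; linarith only [hle, hb1]
    calc ‖xhat‖ ≤ _ := by rw [hsplit]; exact norm_add_le _ _
      _ ≤ ‖x‖ + ε⁻¹ * ‖wv‖ := add_le_add n1 n2
  -- finish
  have htri : ‖A xhat - b‖ ≤ ‖∑ i : Fin n, g i • u i‖ + (‖E x‖ + ‖E xhat‖) := by
    rw [key]
    refine le_trans (norm_add_le _ _) (add_le_add le_rfl ?_)
    exact norm_sub_le _ _
  have hq : ε / 2 * ‖xhat‖ ≤ ε / 2 * ‖x‖ + 1 / 2 * ‖wv‖ := by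
    have h := mul_le_mul_of_nonneg_left hxhb (by positivity : (0:ℝ) ≤ ε / 2)
    have h3 : ε / 2 * (‖x‖ + ε⁻¹ * ‖wv‖) = ε / 2 * ‖x‖ + 1 / 2 * ‖wv‖ := by
      field_simp
    linarith only [h, h3]
  have hx0 : 0 ≤ ε * ‖x‖ := mul_nonneg hε.le (norm_nonneg x)
  linarith only [htri, hgb, hEx, hExhat, hq, hwvb, hx0]
end

section
/- Let f : [0,1] → ℝ be continuous, let x₁,…,x_N ∈ [0,1], and suppose there exist continuous functions g₀,…,g_{n−1} on [0,1], a function f̃ = Σ_{i=0}^{n−1} d_i g_i with ‖f − f̃‖_{L^∞[0,1]} ≤ δ, and a matrix A ∈ ℝ^{N×n} with A_{ji} = g_i(x_j) whose pseudo-inverse satisfies ‖A^†‖₂ ≤ M and A^† (f̃(x_j))_j = (d_i)_i. Then ‖f‖_{L^∞[0,1]} ≤ √n · M · max_i ‖g_i‖_∞ · (‖(f(x_j))_j‖₂ + √N δ) + δ. -/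
open Set Finset Matrix

lemma eucl_triangle (N : ℕ) (a b : Fin N → ℝ) :
    Real.sqrt (∑ j, (a j + b j) ^ 2) ≤
      Real.sqrt (∑ j, (a j) ^ 2) + Real.sqrt (∑ j, (b j) ^ 2) := by
  let u : EuclideanSpace ℝ (Fin N) := WithLp.toLp 2 a
  let v : EuclideanSpace ℝ (Fin N) := WithLp.toLp 2 b
  have h := norm_add_le u v
  simpa [u, v, EuclideanSpace.norm_eq, Real.norm_eq_abs, sq_abs] using h

/-- an abstract Lebesgue-constant-type bound: the sup-norm of `f` on
`[0,1]` is controlled by its values at the collocation points plus the best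
approximation error `δ` in the span of `g₀,…,g_{n-1}`.  Here `P = A†` is the
Moore–Penrose pseudo-inverse of the interpolation matrix `A`, with spectral norm at
most `M`, recovering the coefficients `d` from the samples of `f̃`, and `G` is
`max_i ‖g_i‖_∞`. -/
theorem sup_norm_bound_from_collocation
    (N n : ℕ) (f : ℝ → ℝ) (hf : ContinuousOn f (Icc (0:ℝ) 1))
    (xs : Fin N → ℝ) (hxs : ∀ j, xs j ∈ Icc (0:ℝ) 1)
    (g : Fin n → ℝ → ℝ) (hg : ∀ i, ContinuousOn (g i) (Icc (0:ℝ) 1))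
    (d : Fin n → ℝ) (ftil : ℝ → ℝ)
    (hftil : ∀ x, ftil x = ∑ i : Fin n, d i * g i x)
    (δ : ℝ) (hδ : ∀ x ∈ Icc (0:ℝ) 1, |f x - ftil x| ≤ δ)
    (A : Matrix (Fin N) (Fin n) ℝ) (hA : ∀ j i, A j i = g i (xs j))
    (P : Matrix (Fin n) (Fin N) ℝ)
    (hp1 : A * P * A = A) (hp2 : P * A * P = P)
    (hp3 : (A * P)ᵀ = A * P) (hp4 : (P * A)ᵀ = P * A)
    (M : ℝ)
    (hM : ∀ y : Fin N → ℝ,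
      Real.sqrt (∑ i : Fin n, (P.mulVec y i) ^ 2) ≤
        M * Real.sqrt (∑ j : Fin N, (y j) ^ 2))
    (hPd : P.mulVec (fun j => ftil (xs j)) = d)
    (G : ℝ) (hG : ∀ i : Fin n, ∀ x ∈ Icc (0:ℝ) 1, |g i x| ≤ G) :
    ∀ x ∈ Icc (0:ℝ) 1,
      |f x| ≤ Real.sqrt n * M * G *
          (Real.sqrt (∑ j : Fin N, (f (xs j)) ^ 2) + Real.sqrt N * δ) + δ := by
  intro x hx
  have hδ0 : (0:ℝ) ≤ δ :=
    le_trans (abs_nonneg _) (hδ 0 ⟨le_refl 0, zero_le_one⟩)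
  set fS : ℝ := Real.sqrt (∑ j : Fin N, (f (xs j)) ^ 2) with hfS
  have hfS0 : 0 ≤ fS := Real.sqrt_nonneg _
  have h1 : |f x| ≤ |ftil x| + δ := by
    have := hδ x hx
    have h := abs_sub_abs_le_abs_sub (f x) (ftil x)
    linarith
  have h2 : |ftil x| ≤ ∑ i : Fin n, |d i| * |g i x| := by
    rw [hftil]
    refine le_trans (Finset.abs_sum_le_sum_abs _ _) ?_
    simp [abs_mul]
  suffices key : (∑ i : Fin n, |d i| * |g i x|) ≤
      Real.sqrt n * M * G * (fS + Real.sqrt N * δ) by linarith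
  rcases Nat.eq_zero_or_pos N with hN | hN
  · subst hN
    have hd : d = 0 := by
      rw [← hPd]; funext i; simp [Matrix.mulVec, dotProduct]
    simp [hd, fS]
  rcases Nat.eq_zero_or_pos n with hn | hn
  · subst hn
    simp
  -- M ≥ 0
  have hNpos : (0:ℝ) < Real.sqrt N := Real.sqrt_pos.2 (by exact_mod_cast hN)
  have hM0 : 0 ≤ M := by
    have h := hM (fun _ => 1)
    have h0 : (0:ℝ) ≤ Real.sqrt (∑ i : Fin n, (P.mulVec (fun _ => 1) i) ^ 2) :=
      Real.sqrt_nonneg _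
    have : (0:ℝ) ≤ M * Real.sqrt (∑ j : Fin N, (1:ℝ) ^ 2) := le_trans h0 h
    simp only [one_pow, Finset.sum_const, Finset.card_univ, Fintype.card_fin,
      nsmul_eq_mul, mul_one] at this
    nlinarith
  have hG0 : 0 ≤ G := le_trans (abs_nonneg _) (hG ⟨0, hn⟩ x hx)
  -- Cauchy-Schwarz
  set D : ℝ := Real.sqrt (∑ i : Fin n, (d i) ^ 2) with hD
  have hCS : (∑ i : Fin n, |d i|) ≤ Real.sqrt n * D := by
    have h := sq_sum_le_card_mul_sum_sq (s := (Finset.univ : Finset (Fin n)))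
      (f := fun i => |d i|)
    simp only [Finset.card_univ, Fintype.card_fin, sq_abs] at h
    have := Real.sqrt_le_sqrt h
    rwa [Real.sqrt_sq (by positivity), Real.sqrt_mul (by positivity)] at this
  -- bound D
  have hDb : D ≤ M * (fS + Real.sqrt N * δ) := by
    have h := hM (fun j => ftil (xs j))
    rw [hPd] at h
    have htri : Real.sqrt (∑ j : Fin N, (ftil (xs j)) ^ 2) ≤ fS + Real.sqrt N * δ := by
      have h1 := eucl_triangle N (fun j => f (xs j)) (fun j => ftil (xs j) - f (xs j))
      simp only [add_sub_cancel] at h1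
      have h2 : Real.sqrt (∑ j : Fin N, (ftil (xs j) - f (xs j)) ^ 2) ≤ Real.sqrt N * δ := by
        have hsum : (∑ j : Fin N, (ftil (xs j) - f (xs j)) ^ 2) ≤ (N:ℝ) * δ ^ 2 := by
          calc (∑ j : Fin N, (ftil (xs j) - f (xs j)) ^ 2)
              ≤ ∑ j : Fin N, δ ^ 2 := by
                refine Finset.sum_le_sum fun j _ => ?_
                have := hδ (xs j) (hxs j)
                nlinarith [this, abs_nonneg (f (xs j) - ftil (xs j)),
                  sq_abs (f (xs j) - ftil (xs j))]
            _ = (N:ℝ) * δ ^ 2 := by simp [mul_comm]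
        calc Real.sqrt (∑ j : Fin N, (ftil (xs j) - f (xs j)) ^ 2)
            ≤ Real.sqrt ((N:ℝ) * δ ^ 2) := Real.sqrt_le_sqrt hsum
          _ = Real.sqrt N * δ := by
              rw [Real.sqrt_mul (by positivity), Real.sqrt_sq hδ0]
      linarith
    calc D ≤ M * Real.sqrt (∑ j : Fin N, (ftil (xs j)) ^ 2) := h
      _ ≤ M * (fS + Real.sqrt N * δ) := by
          exact mul_le_mul_of_nonneg_left htri hM0
  have hsumd0 : 0 ≤ ∑ i : Fin n, |d i| := Finset.sum_nonneg fun i _ => abs_nonneg _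
  have hD0 : 0 ≤ D := Real.sqrt_nonneg _
  have hn0 : (0:ℝ) ≤ Real.sqrt n := Real.sqrt_nonneg _
  have step1 : (∑ i : Fin n, |d i| * |g i x|) ≤ (∑ i : Fin n, |d i|) * G := by
    rw [Finset.sum_mul]
    refine Finset.sum_le_sum fun i _ => ?_
    exact mul_le_mul_of_nonneg_left (hG i x hx) (abs_nonneg _)
  calc (∑ i : Fin n, |d i| * |g i x|)
      ≤ (∑ i : Fin n, |d i|) * G := step1
    _ ≤ (Real.sqrt n * D) * G := mul_le_mul_of_nonneg_right hCS hG0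
    _ ≤ (Real.sqrt n * (M * (fS + Real.sqrt N * δ))) * G := by
        exact mul_le_mul_of_nonneg_right
          (mul_le_mul_of_nonneg_left hDb hn0) hG0
    _ = Real.sqrt n * M * G * (fS + Real.sqrt N * δ) := by ring
end
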